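/- Let n ≥ 2 and d ≥ 0. The number of set partitions of {1, 2, …, d} into at most n nonempty blocks equals the number of words of length d over the set {e} ∪ C_n in S_n (the identity together with the permutations with descent set {1}) that reduce to the identity permutation. -/

import Mathlib

/-- The cycle `σ_k = (1 k k-1 ⋯ 3 2)` of `S_n` (1-based: `σ_k(1) = k`,
`σ_k(i) = i-1` for `2 ≤ i ≤ k`, `σ_k(i) = i` for `i > k`), written 0-based on `Fin n`:
it sends `0 ↦ k-1`, `i ↦ i-1` for `1 ≤ i ≤ k-1`, and fixes `i ≥ k`. -/
def sigmaPerm (n k : ℕ) (hk : 2 ≤ k) (hkn : k ≤ n) : Equiv.Perm (Fin n) where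
  toFun i := ⟨if (i : ℕ) = 0 then k - 1 else if (i : ℕ) ≤ k - 1 then (i : ℕ) - 1 else (i : ℕ),
    by have := i.isLt; split_ifs <;> omega⟩
  invFun i := ⟨if (i : ℕ) = k - 1 then 0 else if (i : ℕ) < k - 1 then (i : ℕ) + 1 else (i : ℕ),
    by have := i.isLt; split_ifs <;> omega⟩
  left_inv := by
    intro i
    have := i.isLt
    apply Fin.ext
    simp only [Fin.val_mk]
    split_ifs <;> first
      | omega
      | (simp_all only [Fin.val_mk] <;> omega)
  right_inv := by
    intro i
    have := i.isLt
    apply Fin.ext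
    simp only [Fin.val_mk]
    split_ifs <;> first
      | omega
      | (simp_all only [Fin.val_mk] <;> omega)

/-- The set `C_n = {σ_2, …, σ_n}` of the permutations of `{1, …, n}`
whose descent set is `{1}`. -/
def Cn (n : ℕ) : Finset (Equiv.Perm (Fin n)) :=
  (Finset.Icc 2 n).attach.image fun k : {x // x ∈ Finset.Icc 2 n} =>
    sigmaPerm n k.1 (Finset.mem_Icc.mp k.2).1 (Finset.mem_Icc.mp k.2).2


/-- the generator moving the card at position `v` to the top. -/
def genPerm (n : ℕ) (v : Fin n) : Equiv.Perm (Fin n) where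
  toFun i := ⟨if (i : ℕ) = 0 then v else if (i : ℕ) ≤ (v : ℕ) then (i : ℕ) - 1 else (i : ℕ),
    by have := i.isLt; have := v.isLt; split_ifs <;> omega⟩
  invFun i := ⟨if (i : ℕ) = (v : ℕ) then 0 else if (i : ℕ) < (v : ℕ) then (i : ℕ) + 1 else (i : ℕ),
    by have := i.isLt; have := v.isLt; split_ifs <;> omega⟩
  left_inv := by
    intro i
    have := i.isLt
    apply Fin.ext
    simp only [Fin.val_mk]
    split_ifs <;> first
      | omega
      | (simp_all only [Fin.val_mk] <;> omega)
  right_inv := by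
    intro i
    have := i.isLt
    apply Fin.ext
    simp only [Fin.val_mk]
    split_ifs <;> first
      | omega
      | (simp_all only [Fin.val_mk] <;> omega)

lemma genPerm_apply_val (n : ℕ) (v i : Fin n) :
    ((genPerm n v i : Fin n) : ℕ) =
      if (i : ℕ) = 0 then (v : ℕ) else if (i : ℕ) ≤ (v : ℕ) then (i : ℕ) - 1 else (i : ℕ) := rfl

lemma sigmaPerm_apply_val (n k : ℕ) (hk : 2 ≤ k) (hkn : k ≤ n) (i : Fin n) :
    ((sigmaPerm n k hk hkn i : Fin n) : ℕ) =
      if (i : ℕ) = 0 then k - 1 else if (i : ℕ) ≤ k - 1 then (i : ℕ) - 1 else (i : ℕ) := rfl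

lemma genPerm_inv_apply_val (n : ℕ) (v i : Fin n) :
    (((genPerm n v)⁻¹ i : Fin n) : ℕ) =
      if (i : ℕ) = (v : ℕ) then 0 else if (i : ℕ) < (v : ℕ) then (i : ℕ) + 1 else (i : ℕ) := rfl

lemma genPerm_zero (n : ℕ) (hn : 0 < n) (v : Fin n) : genPerm n v ⟨0, hn⟩ = v := by
  apply Fin.ext
  simp [genPerm_apply_val]

lemma genPerm_zero_eq_one (n : ℕ) (hn : 0 < n) : genPerm n ⟨0, hn⟩ = 1 := by
  apply Equiv.ext
  intro i
  apply Fin.ext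
  simp only [genPerm_apply_val, Equiv.Perm.one_apply]
  split_ifs <;> omega

lemma genPerm_mem (n : ℕ) (hn : 2 ≤ n) (v : Fin n) :
    genPerm n v ∈ insert (1 : Equiv.Perm (Fin n)) (Cn n) := by
  rcases Nat.eq_zero_or_pos (v : ℕ) with h0 | h0
  · have : v = ⟨0, by omega⟩ := Fin.ext h0
    rw [this, genPerm_zero_eq_one]
    exact Finset.mem_insert_self _ _
  · apply Finset.mem_insert_of_mem
    have hmem : (v : ℕ) + 1 ∈ Finset.Icc 2 n := Finset.mem_Icc.mpr ⟨by omega, by have := v.isLt; omega⟩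
    rw [Cn, Finset.mem_image]
    refine ⟨⟨(v : ℕ) + 1, hmem⟩, Finset.mem_attach _ _, ?_⟩
    apply Equiv.ext
    intro i
    apply Fin.ext
    rw [sigmaPerm_apply_val, genPerm_apply_val]
    simp only [Fin.val_mk]
    split_ifs <;> omega

lemma gen_classify_aux (n : ℕ) (hn : 0 < n) (k : ℕ) (hk2 : 2 ≤ k) (hkn : k ≤ n) :
    genPerm n (sigmaPerm n k hk2 hkn ⟨0, hn⟩) = sigmaPerm n k hk2 hkn := by
  have hg0 : ((sigmaPerm n k hk2 hkn ⟨0, hn⟩ : Fin n) : ℕ) = k - 1 := by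
    rw [sigmaPerm_apply_val]; simp
  apply Equiv.ext
  intro i
  apply Fin.ext
  rw [genPerm_apply_val, hg0, sigmaPerm_apply_val]

lemma gen_classify (n : ℕ) (hn : 0 < n) (g : Equiv.Perm (Fin n))
    (hg : g ∈ insert (1 : Equiv.Perm (Fin n)) (Cn n)) :
    genPerm n (g ⟨0, hn⟩) = g := by
  rcases Finset.mem_insert.mp hg with h1 | h2
  · subst h1
    simpa using genPerm_zero_eq_one n hn
  · rw [Cn, Finset.mem_image] at h2
    obtain ⟨⟨k, hk⟩, -, rfl⟩ := h2
    obtain ⟨hk2, hkn⟩ := Finset.mem_Icc.mp hk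
    exact gen_classify_aux n hn k hk2 hkn

/-- `A` is a set partition of `{1, …, d}`: a (finite) family of pairwise disjoint
nonempty subsets (blocks) whose union is `{1, …, d}`. -/
def IsSetPartition (d : ℕ) (A : Finset (Finset ℕ)) : Prop :=
  (∀ b ∈ A, b.Nonempty) ∧ (A : Set (Finset ℕ)).PairwiseDisjoint id ∧
    A.sup id = Finset.Icc 1 d


/-! ### The move-to-front state machine -/

variable {n : ℕ}

/-- state after `t` moves: `st c t` maps positions to cards. -/
def st (c : ℕ → Fin n) : ℕ → Equiv.Perm (Fin n)
  | 0 => 1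
  | t+1 => st c t * genPerm n ((st c t)⁻¹ (c t))

def occ (c : ℕ → Fin n) (t : ℕ) (j : Fin n) : Prop := ∃ i, i < t ∧ c i = j

def lo (c : ℕ → Fin n) (t : ℕ) (j : Fin n) : ℕ :=
  Nat.findGreatest (fun i => i < t ∧ c i = j) t

lemma occ_mono {c : ℕ → Fin n} {t t' : ℕ} (h : t ≤ t') {j : Fin n} (ho : occ c t j) :
    occ c t' j := by
  obtain ⟨i, hi, hci⟩ := ho; exact ⟨i, lt_of_lt_of_le hi h, hci⟩

lemma lo_spec {c : ℕ → Fin n} {t : ℕ} {j : Fin n} (h : occ c t j) :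
    lo c t j < t ∧ c (lo c t j) = j := by
  obtain ⟨i, hi, hci⟩ := h
  exact Nat.findGreatest_spec (P := fun i => i < t ∧ c i = j) (le_of_lt hi) ⟨hi, hci⟩

lemma lo_greatest {c : ℕ → Fin n} {t i : ℕ} {j : Fin n} (h : lo c t j < i) (hit : i < t) :
    c i ≠ j :=
  fun hc => Nat.findGreatest_is_greatest (P := fun i => i < t ∧ c i = j) h (le_of_lt hit) ⟨hit, hc⟩

lemma occ_succ {c : ℕ → Fin n} {t : ℕ} {j : Fin n} :
    occ c (t+1) j ↔ occ c t j ∨ c t = j := by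
  constructor
  · rintro ⟨i, hi, hci⟩
    rcases Nat.lt_succ_iff_lt_or_eq.mp hi with h | h
    · exact Or.inl ⟨i, h, hci⟩
    · subst h; exact Or.inr hci
  · rintro (⟨i, hi, hci⟩ | h)
    · exact ⟨i, by omega, hci⟩
    · exact ⟨t, by omega, h⟩

lemma lo_succ_self {c : ℕ → Fin n} {t : ℕ} {j : Fin n} (h : c t = j) :
    lo c (t+1) j = t := by
  have h1 : t ≤ lo c (t+1) j := Nat.le_findGreatest (P := fun i => i < t + 1 ∧ c i = j) (by omega) ⟨by omega, h⟩
  have h2 := (lo_spec (occ_succ.mpr (Or.inr h))).1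
  omega

lemma lo_succ_ne {c : ℕ → Fin n} {t : ℕ} {j : Fin n} (h : c t ≠ j) :
    lo c (t+1) j = lo c t j := by
  by_cases ho : occ c t j
  · have ho' : occ c (t+1) j := occ_mono (by omega) ho
    have s1 := lo_spec ho
    have s2 := lo_spec ho'
    have hne : lo c (t+1) j ≠ t := fun he => h (he ▸ s2.2)
    have l1 : lo c (t+1) j ≤ lo c t j :=
      Nat.le_findGreatest (P := fun i => i < t ∧ c i = j) (by omega) ⟨by omega, s2.2⟩
    have l2 : lo c t j ≤ lo c (t+1) j :=
      Nat.le_findGreatest (P := fun i => i < t + 1 ∧ c i = j) (by omega) ⟨by omega, s1.2⟩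
    omega
  · have ho' : ¬ occ c (t+1) j := by
      intro hx
      rcases occ_succ.mp hx with h1 | h1
      · exact ho h1
      · exact h h1
    have e1 : lo c (t+1) j = 0 := Nat.findGreatest_eq_zero_iff.mpr
      (fun m _ _ hP => ho' ⟨m, hP⟩)
    have e2 : lo c t j = 0 := Nat.findGreatest_eq_zero_iff.mpr
      (fun m _ _ hP => ho ⟨m, hP⟩)
    omega

lemma genPerm_inv_v (hn : 0 < n) (v : Fin n) : (genPerm n v)⁻¹ v = ⟨0, hn⟩ := by
  apply Fin.ext
  rw [genPerm_inv_apply_val]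
  simp

lemma genPerm_inv_pos {v p : Fin n} (h : p ≠ v) : 0 < (((genPerm n v)⁻¹ p : Fin n) : ℕ) := by
  rw [genPerm_inv_apply_val]
  have : (p : ℕ) ≠ (v : ℕ) := fun hc => h (Fin.ext hc)
  split_ifs <;> omega

lemma genPerm_inv_mono {v p q : Fin n} (hp : p ≠ v) (hq : q ≠ v) (hpq : p < q) :
    (genPerm n v)⁻¹ p < (genPerm n v)⁻¹ q := by
  have hp' : (p : ℕ) ≠ (v : ℕ) := fun hc => hp (Fin.ext hc)
  have hq' : (q : ℕ) ≠ (v : ℕ) := fun hc => hq (Fin.ext hc)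
  rw [Fin.lt_def] at hpq ⊢
  rw [genPerm_inv_apply_val, genPerm_inv_apply_val]
  split_ifs <;> omega

/-- The fundamental invariant of the move-to-front process. -/
lemma st_inv (c : ℕ → Fin n) (t : ℕ) :
    (∀ j j' : Fin n, ¬occ c t j → ¬occ c t j' → j < j' →
      (st c t)⁻¹ j < (st c t)⁻¹ j') ∧
    (∀ j j' : Fin n, ¬occ c t j → occ c t j' →
      (st c t)⁻¹ j' < (st c t)⁻¹ j) ∧
    (∀ j j' : Fin n, occ c t j → occ c t j' → lo c t j' < lo c t j →
      (st c t)⁻¹ j < (st c t)⁻¹ j') := by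
  induction t with
  | zero =>
      refine ⟨fun j j' _ _ h => by simpa [st] using h,
        fun j j' _ hocc => absurd hocc (by intro h; obtain ⟨i, hi, -⟩ := h; omega),
        fun j j' hocc _ _ => absurd hocc (by intro h; obtain ⟨i, hi, -⟩ := h; omega)⟩
  | succ t ih =>
      obtain ⟨iha, ihb, ihc⟩ := ih
      have hn : 0 < n := (c t).pos
      set s := st c t with hs
      set v : Fin n := s⁻¹ (c t) with hv
      have hstep : ∀ j : Fin n, (st c (t+1))⁻¹ j = (genPerm n v)⁻¹ (s⁻¹ j) := by
        intro j
        show ((s * genPerm n v)⁻¹) j = _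
        rw [mul_inv_rev]
        rfl
      have hvj : ∀ j : Fin n, s⁻¹ j = v ↔ j = c t := by
        intro j
        constructor
        · intro h
          have := congrArg s h
          simpa [hv] using this
        · intro h; rw [h]
      refine ⟨?_, ?_, ?_⟩
      · intro j j' hj hj' hlt
        rw [occ_succ] at hj hj'
        push_neg at hj hj'
        rw [hstep, hstep]
        exact genPerm_inv_mono (fun h => hj.2 ((hvj j).mp h).symm)
          (fun h => hj'.2 ((hvj j').mp h).symm) (iha j j' hj.1 hj'.1 hlt)
      · intro j j' hj hj'
        rw [occ_succ] at hj
        push_neg at hj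
        rw [hstep, hstep]
        by_cases hc : j' = c t
        · have h1 : s⁻¹ j' = v := (hvj j').mpr hc
          rw [h1, genPerm_inv_v hn]
          have hne : s⁻¹ j ≠ v := fun h => hj.2 ((hvj j).mp h).symm
          have hpos := genPerm_inv_pos (v := v) (p := s⁻¹ j) hne
          rw [Fin.lt_def]
          simpa using hpos
        · rcases occ_succ.mp hj' with h1 | h1
          · exact genPerm_inv_mono (fun h => hc ((hvj j').mp h))
              (fun h => hj.2 ((hvj j).mp h).symm) (ihb j j' hj.1 h1)
          · exact absurd h1 (fun h => hc h.symm)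
      · intro j j' hj hj' hlo
        rw [hstep, hstep]
        by_cases hc' : j' = c t
        · exfalso
          have : lo c (t+1) j' = t := lo_succ_self hc'.symm
          have h2 := (lo_spec hj).1
          omega
        · by_cases hc : j = c t
          · have h1 : s⁻¹ j = v := (hvj j).mpr hc
            rw [h1, genPerm_inv_v hn]
            have := genPerm_inv_pos (v := v) (p := s⁻¹ j') (fun h => hc' ((hvj j').mp h))
            rw [Fin.lt_def]
            simpa using this
          · have hoj : occ c t j := by
              rcases occ_succ.mp hj with h1 | h1
              · exact h1
              · exact absurd h1 (fun h => hc h.symm)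
            have hoj' : occ c t j' := by
              rcases occ_succ.mp hj' with h1 | h1
              · exact h1
              · exact absurd h1 (fun h => hc' h.symm)
            rw [lo_succ_ne (fun h => hc h.symm), lo_succ_ne (fun h => hc' h.symm)] at hlo
            exact genPerm_inv_mono (fun h => hc ((hvj j).mp h))
              (fun h => hc' ((hvj j').mp h)) (ihc j j' hoj hoj' hlo)

/-! ### Characterization of words reducing to the identity -/

lemma valid_iff_char (c : ℕ → Fin n) (d : ℕ) :
    st c d = 1 ↔
      ((∀ j j' : Fin n, j ≤ j' → occ c d j' → occ c d j) ∧
       (∀ j j' : Fin n, j < j' → occ c d j' → lo c d j' < lo c d j)) := by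
  obtain ⟨iva, ivb, ivc⟩ := st_inv c d
  constructor
  · intro h
    rw [h] at iva ivb ivc
    simp only [inv_one, Equiv.Perm.one_apply] at iva ivb ivc
    have hdown : ∀ j j' : Fin n, j ≤ j' → occ c d j' → occ c d j := by
      intro j j' hle ho'
      by_contra hno
      have hne : j ≠ j' := fun h => hno (h ▸ ho')
      have := ivb j j' hno ho'
      exact absurd this (by rw [not_lt]; exact le_of_lt (lt_of_le_of_ne hle hne))
    refine ⟨hdown, ?_⟩
    intro j j' hlt ho'
    have hoj : occ c d j := hdown j j' (le_of_lt hlt) ho'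
    have hne : lo c d j ≠ lo c d j' := by
      intro he
      have h1 := (lo_spec hoj).2
      have h2 := (lo_spec ho').2
      rw [he, h2] at h1
      exact absurd (h1 ▸ hlt) (lt_irrefl j')
    rcases lt_or_gt_of_ne hne with h | h
    · exact absurd (ivc j' j ho' hoj h) (by rw [not_lt]; exact le_of_lt hlt)
    · exact h
  · rintro ⟨hdown, hanti⟩
    have hmono : StrictMono (fun j => (st c d)⁻¹ j) := by
      intro j j' hlt
      by_cases ho' : occ c d j'
      · exact ivc j j' (hdown j j' (le_of_lt hlt) ho') ho' (hanti j j' hlt ho')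
      · by_cases hoj : occ c d j
        · exact ivb j' j ho' hoj
        · exact iva j j' hoj ho' hlt
    have hid : (fun j => (st c d)⁻¹ j) = (id : Fin n → Fin n) := by
      apply (StrictMono.range_inj hmono strictMono_id).mp
      rw [Set.range_id]
      exact Set.range_eq_univ.mpr (Equiv.surjective _)
    have : (st c d)⁻¹ = 1 := Equiv.ext (fun j => congrFun hid j)
    rwa [inv_eq_one] at this

lemma st_congr {c c' : ℕ → Fin n} {t : ℕ} (h : ∀ i < t, c i = c' i) :
    st c t = st c' t := by
  induction t with
  | zero => rfl
  | succ t ih =>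
      have ih' := ih (fun i hi => h i (by omega))
      show st c t * _ = st c' t * _
      rw [ih', h t (by omega)]

/-! ### Words over the generators correspond to arbitrary card sequences -/

def wordState (u : ℕ → Equiv.Perm (Fin n)) : ℕ → Equiv.Perm (Fin n)
  | 0 => 1
  | t+1 => wordState u t * u t

lemma wordState_congr {u u' : ℕ → Equiv.Perm (Fin n)} {t : ℕ} (h : ∀ i < t, u i = u' i) :
    wordState u t = wordState u' t := by
  induction t with
  | zero => rfl
  | succ t ih =>
      show wordState u t * _ = wordState u' t * _
      rw [ih (fun i hi => h i (by omega)), h t (by omega)]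

lemma ofFn_prod_eq_wordState {d : ℕ} (u : ℕ → Equiv.Perm (Fin n)) :
    (List.ofFn fun i : Fin d => u i).prod = wordState u d := by
  induction d with
  | zero => rfl
  | succ d ih =>
      rw [List.ofFn_succ', List.concat_eq_append, List.prod_append]
      show _ * ((u d) * 1) = _
      rw [mul_one]
      show (List.ofFn fun i : Fin d => u i).prod * u d = _
      rw [ih]
      rfl

/-- extension of a finite sequence by `0`. -/
def extc (hn : 2 ≤ n) {d : ℕ} (c : Fin d → Fin n) : ℕ → Fin n :=
  fun i => if h : i < d then c ⟨i, h⟩ else ⟨0, by omega⟩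

lemma st_gen_word (hn : 2 ≤ n) (u : ℕ → Equiv.Perm (Fin n)) (hu : ∀ i, u i ∈ insert (1 : Equiv.Perm (Fin n)) (Cn n)) (t : ℕ) :
    st (fun i => wordState u (i+1) ⟨0, by omega⟩) t = wordState u t := by
  induction t with
  | zero => rfl
  | succ t ih =>
      show st _ t * genPerm n _ = wordState u t * u t
      rw [ih]
      congr 1
      show genPerm n ((wordState u t)⁻¹ ((wordState u t) ((u t) ⟨0, by omega⟩))) = u t
      rw [Equiv.Perm.coe_inv, Equiv.symm_apply_apply]
      exact gen_classify n (by omega) (u t) (hu t)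

/-- Equivalence between words reducing to identity and valid card sequences. -/
def wordEquiv (hn : 2 ≤ n) (d : ℕ) :
    {w : Fin d → {x // x ∈ insert (1 : Equiv.Perm (Fin n)) (Cn n)} //
        (List.ofFn fun i => ((w i : Equiv.Perm (Fin n)))).prod = 1} ≃
    {c : Fin d → Fin n // st (extc hn c) d = 1} where
  toFun w :=
    ⟨fun t => wordState (fun i => if h : i < d then ((w.1 ⟨i, h⟩ : Equiv.Perm (Fin n))) else 1)
        ((t : ℕ)+1) ⟨0, by omega⟩, by
      set u : ℕ → Equiv.Perm (Fin n) :=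
        fun i => if h : i < d then ((w.1 ⟨i, h⟩ : Equiv.Perm (Fin n))) else 1 with hu
      have hmem : ∀ i, u i ∈ insert (1 : Equiv.Perm (Fin n)) (Cn n) := by
        intro i
        rw [hu]
        dsimp only
        split_ifs with h
        · exact (w.1 ⟨i, h⟩).2
        · exact Finset.mem_insert_self _ _
      have hcongr : st (extc hn (fun t : Fin d => wordState u ((t:ℕ)+1) ⟨0, by omega⟩)) d
          = st (fun i => wordState u (i+1) ⟨0, by omega⟩) d := by
        apply st_congr
        intro i hi
        simp only [extc, hi, dif_pos]
      rw [hcongr, st_gen_word hn u hmem d]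
      have : (List.ofFn fun i : Fin d => u i).prod = wordState u d :=
        ofFn_prod_eq_wordState u
      rw [← this]
      have : (List.ofFn fun i : Fin d => u (i : ℕ)) = List.ofFn fun i => ((w.1 i : Equiv.Perm (Fin n))) := by
        apply congrArg List.ofFn
        funext i
        simp only [hu]
        simp [i.isLt]
      rw [this]
      exact w.2⟩
  invFun c :=
    ⟨fun i => ⟨genPerm n ((st (extc hn c.1) (i : ℕ))⁻¹ (extc hn c.1 (i : ℕ))),
        genPerm_mem n hn _⟩, by
      set u : ℕ → Equiv.Perm (Fin n) :=
        fun i => genPerm n ((st (extc hn c.1) i)⁻¹ (extc hn c.1 i)) with hu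
      have hws : ∀ t, wordState u t = st (extc hn c.1) t := by
        intro t
        induction t with
        | zero => rfl
        | succ t ih => show wordState u t * u t = st _ t * _; rw [ih]
      have : (List.ofFn fun i : Fin d =>
          (genPerm n ((st (extc hn c.1) (i:ℕ))⁻¹ (extc hn c.1 (i:ℕ))))) =
          List.ofFn fun i : Fin d => u (i : ℕ) := rfl
      rw [this, ofFn_prod_eq_wordState u, hws d]
      exact c.2⟩
  left_inv := by
    intro w
    apply Subtype.ext
    funext i
    apply Subtype.ext
    set u : ℕ → Equiv.Perm (Fin n) :=
      fun i => if h : i < d then ((w.1 ⟨i, h⟩ : Equiv.Perm (Fin n))) else 1 with hu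
    have hmem : ∀ i, u i ∈ insert (1 : Equiv.Perm (Fin n)) (Cn n) := by
      intro i
      rw [hu]; dsimp only
      split_ifs with h
      · exact (w.1 ⟨i, h⟩).2
      · exact Finset.mem_insert_self _ _
    show genPerm n ((st (extc hn _) (i:ℕ))⁻¹ (extc hn _ (i:ℕ))) = (w.1 i : Equiv.Perm (Fin n))
    have hcongr : st (extc hn (fun t : Fin d => wordState u ((t:ℕ)+1) ⟨0, by omega⟩)) (i:ℕ)
        = st (fun k => wordState u (k+1) ⟨0, by omega⟩) (i:ℕ) := by
      apply st_congr
      intro k hk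
      have : k < d := lt_trans hk i.isLt
      simp only [extc, this, dif_pos]
    have hext : extc hn (fun t : Fin d => wordState u ((t:ℕ)+1) ⟨0, by omega⟩) (i:ℕ)
        = wordState u ((i:ℕ)+1) ⟨0, by omega⟩ := by
      simp only [extc, i.isLt, dif_pos]
    rw [hcongr, hext, st_gen_word hn u hmem]
    have h1 : wordState u ((i:ℕ)+1) ⟨0, by omega⟩ = wordState u (i:ℕ) (u (i:ℕ) ⟨0, by omega⟩) := rfl
    rw [h1, Equiv.Perm.coe_inv, Equiv.symm_apply_apply]
    have h2 : u (i : ℕ) = (w.1 i : Equiv.Perm (Fin n)) := by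
      rw [hu]; dsimp only
      rw [dif_pos i.isLt]
    rw [gen_classify n (by omega) (u (i:ℕ)) (hmem (i:ℕ)), h2]
  right_inv := by
    intro c
    apply Subtype.ext
    funext t
    set u : ℕ → Equiv.Perm (Fin n) :=
      fun i => genPerm n ((st (extc hn c.1) i)⁻¹ (extc hn c.1 i)) with hu
    have hws : ∀ s, wordState u s = st (extc hn c.1) s := by
      intro s
      induction s with
      | zero => rfl
      | succ s ih => show wordState u s * u s = st _ s * _; rw [ih]
    show wordState (fun i => if h : i < d then u i else 1) ((t:ℕ)+1) ⟨0, by omega⟩ = c.1 t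
    have hcongr : wordState (fun i => if h : i < d then u i else 1) ((t:ℕ)+1)
        = wordState u ((t:ℕ)+1) := by
      apply wordState_congr
      intro i hi
      have : i < d := by omega
      simp only [this, dif_pos]
    rw [hcongr, hws ((t:ℕ)+1)]
    show st (extc hn c.1) (t:ℕ) (genPerm n _ ⟨0, by omega⟩) = c.1 t
    rw [genPerm_zero n (by omega), Equiv.Perm.coe_inv, Equiv.apply_symm_apply]
    simp only [extc, t.isLt, dif_pos]

/-! ### Partitions from card sequences -/

def blk {d : ℕ} (c : Fin d → Fin n) (j : Fin n) : Finset ℕ :=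
  (Finset.univ.filter (fun t : Fin d => c t = j)).image (fun t : Fin d => (t : ℕ) + 1)

def parts {d : ℕ} (c : Fin d → Fin n) : Finset (Finset ℕ) :=
  (Finset.univ.filter (fun j : Fin n => blk c j ≠ ∅)).image (blk c)

lemma mem_blk {d : ℕ} {c : Fin d → Fin n} {j : Fin n} {m : ℕ} :
    m ∈ blk c j ↔ ∃ t : Fin d, c t = j ∧ (t : ℕ) + 1 = m := by
  constructor
  · intro hm
    obtain ⟨t, ht, htm⟩ := Finset.mem_image.mp hm
    exact ⟨t, (Finset.mem_filter.mp ht).2, htm⟩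
  · rintro ⟨t, h1, h2⟩
    exact Finset.mem_image.mpr ⟨t, Finset.mem_filter.mpr ⟨Finset.mem_univ _, h1⟩, h2⟩

lemma mem_blk_self {d : ℕ} {c : Fin d → Fin n} (t : Fin d) : (t : ℕ) + 1 ∈ blk c (c t) :=
  mem_blk.mpr ⟨t, rfl, rfl⟩

lemma blk_subset {d : ℕ} {c : Fin d → Fin n} {j : Fin n} : blk c j ⊆ Finset.Icc 1 d := by
  intro m hm
  obtain ⟨t, -, ht⟩ := mem_blk.mp hm
  have := t.isLt
  exact Finset.mem_Icc.mpr ⟨by omega, by omega⟩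

lemma blk_val_eq {d : ℕ} {c : Fin d → Fin n} {j : Fin n} {m : ℕ} (hm : m ∈ blk c j)
    (h1 : 1 ≤ m) (hd : m ≤ d) : c ⟨m - 1, by omega⟩ = j := by
  obtain ⟨t, ht, htm⟩ := mem_blk.mp hm
  have : t = (⟨m - 1, by omega⟩ : Fin d) := Fin.ext (show (t : ℕ) = m - 1 by omega)
  rwa [this] at ht

lemma parts_isPartition {d : ℕ} (c : Fin d → Fin n) : IsSetPartition d (parts c) := by
  refine ⟨?_, ?_, ?_⟩
  · intro b hb
    obtain ⟨j, hj, rfl⟩ := Finset.mem_image.mp hb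
    have := Finset.mem_filter.mp hj
    exact Finset.nonempty_of_ne_empty this.2
  · intro b1 hb1 b2 hb2 hne
    obtain ⟨j1, -, rfl⟩ := Finset.mem_image.mp (Finset.mem_coe.mp hb1)
    obtain ⟨j2, -, rfl⟩ := Finset.mem_image.mp (Finset.mem_coe.mp hb2)
    have hj : j1 ≠ j2 := fun h => hne (by rw [h])
    simp only [Function.onFun, id_eq]
    rw [Finset.disjoint_left]
    intro m hm1 hm2
    obtain ⟨t1, ht1, htm1⟩ := mem_blk.mp hm1
    obtain ⟨t2, ht2, htm2⟩ := mem_blk.mp hm2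
    have : t1 = t2 := Fin.ext (by omega)
    exact hj (by rw [← ht1, this, ht2])
  · apply Finset.Subset.antisymm
    · intro m hm
      rw [Finset.mem_sup] at hm
      obtain ⟨b, hb, hmb⟩ := hm
      obtain ⟨j, -, rfl⟩ := Finset.mem_image.mp hb
      exact blk_subset hmb
    · intro m hm
      rw [Finset.mem_sup]
      obtain ⟨h1, hd⟩ := Finset.mem_Icc.mp hm
      set t : Fin d := ⟨m - 1, by omega⟩ with htdef
      refine ⟨blk c (c t), ?_, ?_⟩
      · apply Finset.mem_image_of_mem
        rw [Finset.mem_filter]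
        exact ⟨Finset.mem_univ _, fun h => by
          have := mem_blk_self (c := c) t
          rw [h] at this
          exact absurd this (Finset.notMem_empty _)⟩
      · have := mem_blk_self (c := c) t
        simpa only [id_eq, htdef] using (by rwa [show (t : ℕ) + 1 = m by simp [htdef]; omega] at this)

lemma parts_card_le {d : ℕ} (c : Fin d → Fin n) : (parts c).card ≤ n := by
  calc (parts c).card ≤ (Finset.univ.filter (fun j : Fin n => blk c j ≠ ∅)).card :=
        Finset.card_image_le
    _ ≤ (Finset.univ : Finset (Fin n)).card := Finset.card_filter_le _ _
    _ = n := Finset.card_univ.trans (Fintype.card_fin n)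

/-! ### Ranking blocks of a partition by their maxima -/

def sLabel (A : Finset (Finset ℕ)) {d : ℕ} (t : Fin d) : ℕ :=
  (A.filter (fun b => (t : ℕ) + 1 ∈ b)).sup (fun b => b.sup id)

def rnk (A : Finset (Finset ℕ)) (m : ℕ) : ℕ :=
  (A.filter (fun b => m < b.sup id)).card

def cOf (hn : 2 ≤ n) {d : ℕ} (A : Finset (Finset ℕ)) (t : Fin d) : Fin n :=
  if h : rnk A (sLabel A t) < n then ⟨rnk A (sLabel A t), h⟩ else ⟨0, by omega⟩

section PartitionLemmas

variable {d : ℕ} {A : Finset (Finset ℕ)} (hA : IsSetPartition d A)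
include hA

lemma block_subset {b : Finset ℕ} (hb : b ∈ A) : b ⊆ Finset.Icc 1 d := by
  have : b ≤ A.sup id := Finset.le_sup (f := id) hb
  rw [hA.2.2] at this
  exact this

lemma sup_mem_block {b : Finset ℕ} (hb : b ∈ A) : b.sup id ∈ b := by
  have hne : b.Nonempty := hA.1 b hb
  have hm : b.max' hne ∈ b := b.max'_mem hne
  rwa [Finset.max'_eq_sup', Finset.sup'_eq_sup hne id] at hm

lemma block_sup_pos {b : Finset ℕ} (hb : b ∈ A) : 1 ≤ b.sup id := by
  have := Finset.mem_Icc.mp (block_subset hA hb (sup_mem_block hA hb))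
  omega

lemma sup_inj_block {b1 b2 : Finset ℕ} (hb1 : b1 ∈ A) (hb2 : b2 ∈ A)
    (h : b1.sup id = b2.sup id) : b1 = b2 := by
  by_contra hne
  have hd := hA.2.1 (Finset.mem_coe.mpr hb1) (Finset.mem_coe.mpr hb2) hne
  have h1 := sup_mem_block hA hb1
  have h2 := sup_mem_block hA hb2
  rw [h] at h1
  exact absurd h2 (Finset.disjoint_left.mp hd h1)

lemma unique_block {m : ℕ} (h1 : 1 ≤ m) (hd : m ≤ d) :
    ∃ b, b ∈ A ∧ m ∈ b ∧ ∀ b', b' ∈ A → m ∈ b' → b' = b := by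
  have hm : m ∈ A.sup id := by rw [hA.2.2]; exact Finset.mem_Icc.mpr ⟨h1, hd⟩
  obtain ⟨b, hb, hmb⟩ := Finset.mem_sup.mp hm
  refine ⟨b, hb, hmb, ?_⟩
  intro b' hb' hmb'
  by_contra hne
  have hdj := hA.2.1 (Finset.mem_coe.mpr hb') (Finset.mem_coe.mpr hb) hne
  exact absurd hmb (Finset.disjoint_left.mp hdj hmb')

lemma sLabel_eq {b : Finset ℕ} (hb : b ∈ A) (t : Fin d) (ht : (t : ℕ) + 1 ∈ b) :
    sLabel A t = b.sup id := by
  have hfilter : A.filter (fun b' => (t : ℕ) + 1 ∈ b') = {b} := by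
    apply Finset.eq_singleton_iff_unique_mem.mpr
    refine ⟨Finset.mem_filter.mpr ⟨hb, ht⟩, ?_⟩
    intro b' hb'
    obtain ⟨hb'A, hb't⟩ := Finset.mem_filter.mp hb'
    obtain ⟨b0, hb0, hmb0, huniq⟩ := unique_block hA (m := (t:ℕ)+1) (by omega)
      (by have := t.isLt; omega)
    rw [huniq b' hb'A hb't, huniq b hb ht]
  rw [sLabel, hfilter, Finset.sup_singleton]

lemma rnk_lt_card {b : Finset ℕ} (hb : b ∈ A) : rnk A (b.sup id) < A.card := by
  have hsub : A.filter (fun b' => b.sup id < b'.sup id) ⊆ A.erase b := by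
    intro b' hb'
    obtain ⟨hb'A, hlt⟩ := Finset.mem_filter.mp hb'
    refine Finset.mem_erase.mpr ⟨?_, hb'A⟩
    intro he
    rw [he] at hlt
    exact lt_irrefl _ hlt
  calc rnk A (b.sup id) ≤ (A.erase b).card := Finset.card_le_card hsub
    _ < A.card := Finset.card_erase_lt_of_mem hb

lemma rnk_anti {b1 b2 : Finset ℕ} (hb1 : b1 ∈ A) (hb2 : b2 ∈ A)
    (h : b1.sup id < b2.sup id) : rnk A (b2.sup id) < rnk A (b1.sup id) := by
  apply Finset.card_lt_card
  rw [Finset.ssubset_iff_of_subset]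
  · refine ⟨b2, Finset.mem_filter.mpr ⟨hb2, h⟩, ?_⟩
    intro hmem
    exact absurd (Finset.mem_filter.mp hmem).2 (lt_irrefl _)
  · intro b' hb'
    obtain ⟨hb'A, hlt⟩ := Finset.mem_filter.mp hb'
    exact Finset.mem_filter.mpr ⟨hb'A, lt_trans h hlt⟩

lemma rnk_inj {b1 b2 : Finset ℕ} (hb1 : b1 ∈ A) (hb2 : b2 ∈ A)
    (h : rnk A (b1.sup id) = rnk A (b2.sup id)) : b1 = b2 := by
  rcases lt_trichotomy (b1.sup id) (b2.sup id) with hlt | heq | hgt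
  · exact absurd h (Nat.ne_of_gt (rnk_anti hA hb1 hb2 hlt))
  · exact sup_inj_block hA hb1 hb2 heq
  · exact absurd h (Nat.ne_of_lt (rnk_anti hA hb2 hb1 hgt))

lemma rnk_surj {j : ℕ} (hj : j < A.card) : ∃ b ∈ A, rnk A (b.sup id) = j := by
  have himg : A.image (fun b => rnk A (b.sup id)) = Finset.range A.card := by
    apply Finset.eq_of_subset_of_card_le
    · intro x hx
      obtain ⟨b, hb, rfl⟩ := Finset.mem_image.mp hx
      exact Finset.mem_range.mpr (rnk_lt_card hA hb)
    · rw [Finset.card_range]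
      rw [Finset.card_image_of_injOn (fun b1 h1 b2 h2 he => rnk_inj hA h1 h2 he)]
  have : j ∈ A.image (fun b => rnk A (b.sup id)) := by
    rw [himg]; exact Finset.mem_range.mpr hj
  obtain ⟨b, hb, he⟩ := Finset.mem_image.mp this
  exact ⟨b, hb, he⟩

lemma cOf_val (hn : 2 ≤ n) (hcard : A.card ≤ n) {b : Finset ℕ} (hb : b ∈ A) (t : Fin d)
    (ht : (t : ℕ) + 1 ∈ b) : ((cOf hn A t : Fin n) : ℕ) = rnk A (b.sup id) := by
  have hs : sLabel A t = b.sup id := sLabel_eq hA hb t ht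
  have hlt : rnk A (sLabel A t) < n := by
    rw [hs]
    exact lt_of_lt_of_le (rnk_lt_card hA hb) hcard
  rw [cOf, dif_pos hlt]
  show rnk A (sLabel A t) = rnk A (b.sup id)
  rw [hs]

end PartitionLemmas

/-! ### The equivalence between valid sequences and partitions -/

lemma extc_lt (hn : 2 ≤ n) {d : ℕ} (c : Fin d → Fin n) (t : Fin d) :
    extc hn c (t : ℕ) = c t := by
  simp only [extc, t.isLt, dif_pos]

lemma occ_extc_iff (hn : 2 ≤ n) {d : ℕ} (c : Fin d → Fin n) (j : Fin n) :
    occ (extc hn c) d j ↔ ∃ t : Fin d, c t = j := by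
  constructor
  · rintro ⟨i, hi, he⟩
    refine ⟨⟨i, hi⟩, ?_⟩
    rwa [← extc_lt hn c ⟨i, hi⟩]
  · rintro ⟨t, ht⟩
    exact ⟨(t : ℕ), t.isLt, by rwa [extc_lt hn c t]⟩

section MainB

variable (hn : 2 ≤ n) {d : ℕ} {A : Finset (Finset ℕ)}
  (hA : IsSetPartition d A) (hcard : A.card ≤ n)
include hA hcard

lemma cOf_block_val {b : Finset ℕ} (hb : b ∈ A) {t : Fin d} (ht : (t : ℕ) + 1 ∈ b)
    {j : Fin n} (hr : rnk A (b.sup id) = (j : ℕ)) : cOf hn A t = j :=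
  Fin.ext (by rw [cOf_val hA hn hcard hb t ht, hr])

lemma cOf_occ_iff (j : Fin n) :
    occ (extc hn (cOf hn (d := d) A)) d j ↔ (j : ℕ) < A.card := by
  rw [occ_extc_iff]
  constructor
  · rintro ⟨t, ht⟩
    obtain ⟨b, hb, hmb, -⟩ := unique_block hA (m := (t:ℕ)+1) (by omega)
      (by have := t.isLt; omega)
    rw [← ht, cOf_val hA hn hcard hb t hmb]
    exact rnk_lt_card hA hb
  · intro hj
    obtain ⟨b, hb, hr⟩ := rnk_surj hA hj
    have hme : b.sup id ∈ b := sup_mem_block hA hb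
    have hrange := Finset.mem_Icc.mp (block_subset hA hb hme)
    set t : Fin d := ⟨b.sup id - 1, by omega⟩ with htd
    have htb : (t : ℕ) + 1 ∈ b := by
      show b.sup id - 1 + 1 ∈ b
      rwa [Nat.sub_add_cancel hrange.1]
    exact ⟨t, cOf_block_val hn hA hcard hb htb hr⟩

lemma cOf_lo {b : Finset ℕ} (hb : b ∈ A) {j : Fin n} (hr : rnk A (b.sup id) = (j : ℕ)) :
    lo (extc hn (cOf hn (d := d) A)) d j = b.sup id - 1 := by
  have hme : b.sup id ∈ b := sup_mem_block hA hb
  have hrange := Finset.mem_Icc.mp (block_subset hA hb hme)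
  have hocc : occ (extc hn (cOf hn (d := d) A)) d j := by
    rw [cOf_occ_iff hn hA hcard]
    rw [← hr]; exact rnk_lt_card hA hb
  obtain ⟨hlo_lt, hlo_eq⟩ := lo_spec hocc
  -- upper bound
  have hup : lo (extc hn (cOf hn (d := d) A)) d j + 1 ≤ b.sup id := by
    set i := lo (extc hn (cOf hn (d := d) A)) d j
    have hci : cOf hn A ⟨i, hlo_lt⟩ = j := by
      rw [← extc_lt hn (cOf hn (d := d) A) ⟨i, hlo_lt⟩]; exact hlo_eq
    obtain ⟨b', hb', hmb', -⟩ := unique_block hA (m := i+1) (by omega) (by omega)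
    have : rnk A (b'.sup id) = (j : ℕ) := by
      rw [← cOf_val hA hn hcard hb' ⟨i, hlo_lt⟩ hmb', hci]
    have hbb : b' = b := rnk_inj hA hb' hb (by rw [this, hr])
    rw [← hbb]
    exact Finset.le_sup (f := id) hmb'
  -- lower bound
  have hdown : b.sup id - 1 ≤ lo (extc hn (cOf hn (d := d) A)) d j := by
    set t : Fin d := ⟨b.sup id - 1, by omega⟩ with htd
    have htb : (t : ℕ) + 1 ∈ b := by
      show b.sup id - 1 + 1 ∈ b
      rwa [Nat.sub_add_cancel hrange.1]
    have hct : cOf hn A t = j := cOf_block_val hn hA hcard hb htb hr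
    apply Nat.le_findGreatest (by omega)
    refine ⟨by omega, ?_⟩
    show extc hn (cOf hn (d := d) A) (t : ℕ) = j
    rw [extc_lt hn (cOf hn (d := d) A) t, hct]
  omega

lemma cOf_valid : st (extc hn (cOf hn (d := d) A)) d = 1 := by
  rw [valid_iff_char]
  constructor
  · intro j j' hle hocc'
    rw [cOf_occ_iff hn hA hcard] at hocc' ⊢
    have : (j : ℕ) ≤ (j' : ℕ) := hle
    omega
  · intro j j' hlt hocc'
    have hj' : (j' : ℕ) < A.card := (cOf_occ_iff hn hA hcard j').mp hocc'
    have hj : (j : ℕ) < A.card := by have : (j : ℕ) < (j' : ℕ) := hlt; omega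
    obtain ⟨b, hb, hr⟩ := rnk_surj hA hj
    obtain ⟨b', hb', hr'⟩ := rnk_surj hA hj'
    rw [cOf_lo hn hA hcard hb hr, cOf_lo hn hA hcard hb' hr']
    have hsup : b'.sup id < b.sup id := by
      rcases lt_trichotomy (b'.sup id) (b.sup id) with h | h | h
      · exact h
      · exact absurd (sup_inj_block hA hb' hb h)
          (fun he => by
            rw [he, hr] at hr'
            have : (j : ℕ) < (j' : ℕ) := hlt
            omega)
      · have := rnk_anti hA hb hb' h
        rw [hr, hr'] at this
        have h2 : (j : ℕ) < (j' : ℕ) := hlt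
        omega
    have := block_sup_pos hA hb'
    omega

lemma parts_cOf : parts (cOf hn (d := d) A) = A := by
  have hblk : ∀ (b : Finset ℕ), b ∈ A → ∀ j : Fin n, rnk A (b.sup id) = (j : ℕ) →
      blk (cOf hn (d := d) A) j = b := by
    intro b hb j hr
    apply Finset.Subset.antisymm
    · intro m hm
      obtain ⟨t, ht, htm⟩ := mem_blk.mp hm
      obtain ⟨b', hb', hmb', -⟩ := unique_block hA (m := (t:ℕ)+1) (by omega)
        (by have := t.isLt; omega)
      have : rnk A (b'.sup id) = (j : ℕ) := by
        rw [← cOf_val hA hn hcard hb' t hmb', ht]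
      have hbb : b' = b := rnk_inj hA hb' hb (by rw [this, hr])
      rw [← htm, ← hbb]
      exact hmb'
    · intro m hm
      have hrange := Finset.mem_Icc.mp (block_subset hA hb hm)
      set t : Fin d := ⟨m - 1, by omega⟩ with htd
      have htb : (t : ℕ) + 1 ∈ b := by
        show m - 1 + 1 ∈ b
        rwa [Nat.sub_add_cancel hrange.1]
      have hct : cOf hn A t = j := cOf_block_val hn hA hcard hb htb hr
      have : (t : ℕ) + 1 = m := by show m - 1 + 1 = m; omega
      rw [← this]
      rw [← hct]
      exact mem_blk_self t
  apply Finset.Subset.antisymm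
  · intro b'' hb''
    obtain ⟨j, hj, rfl⟩ := Finset.mem_image.mp hb''
    have hne := (Finset.mem_filter.mp hj).2
    obtain ⟨m, hm⟩ := Finset.nonempty_of_ne_empty hne
    obtain ⟨t, ht, htm⟩ := mem_blk.mp hm
    obtain ⟨b, hb, hmb, -⟩ := unique_block hA (m := (t:ℕ)+1) (by omega)
      (by have := t.isLt; omega)
    have hr : rnk A (b.sup id) = (j : ℕ) := by
      rw [← cOf_val hA hn hcard hb t hmb, ht]
    rw [hblk b hb j hr]
    exact hb
  · intro b hb
    have hjlt : rnk A (b.sup id) < n := lt_of_lt_of_le (rnk_lt_card hA hb) hcard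
    set j : Fin n := ⟨rnk A (b.sup id), hjlt⟩ with hjd
    have hr : rnk A (b.sup id) = (j : ℕ) := rfl
    have hbj : blk (cOf hn (d := d) A) j = b := hblk b hb j hr
    rw [parts, Finset.mem_image]
    refine ⟨j, Finset.mem_filter.mpr ⟨Finset.mem_univ _, ?_⟩, hbj⟩
    rw [hbj]
    intro he
    have hme : b.sup id ∈ b := sup_mem_block hA hb
    rw [he] at hme
    exact Finset.notMem_empty _ hme

end MainB

/-! ### Valid sequences are recovered from their partitions -/

lemma blk_ne_empty_iff (hn : 2 ≤ n) {d : ℕ} (c : Fin d → Fin n) (j : Fin n) :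
    blk c j ≠ ∅ ↔ occ (extc hn c) d j := by
  rw [occ_extc_iff]
  constructor
  · intro h
    obtain ⟨m, hm⟩ := Finset.nonempty_of_ne_empty h
    obtain ⟨t, ht, -⟩ := mem_blk.mp hm
    exact ⟨t, ht⟩
  · rintro ⟨t, ht⟩
    intro he
    have := mem_blk_self (c := c) t
    rw [ht, he] at this
    exact Finset.notMem_empty _ this

lemma sup_blk (hn : 2 ≤ n) {d : ℕ} (c : Fin d → Fin n) {j : Fin n}
    (hocc : occ (extc hn c) d j) :
    (blk c j).sup id = lo (extc hn c) d j + 1 := by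
  obtain ⟨hlt, heq⟩ := lo_spec hocc
  set L := lo (extc hn c) d j
  apply le_antisymm
  · apply Finset.sup_le
    intro m hm
    obtain ⟨t, ht, htm⟩ := mem_blk.mp hm
    have hP : (t : ℕ) ≤ L := by
      apply Nat.le_findGreatest (by have := t.isLt; omega)
      exact ⟨t.isLt, by rwa [extc_lt hn c t]⟩
    show m ≤ L + 1
    omega
  · have hct : c ⟨L, hlt⟩ = j := by
      rw [← extc_lt hn c ⟨L, hlt⟩]; exact heq
    have : L + 1 ∈ blk c j := mem_blk.mpr ⟨⟨L, hlt⟩, hct, rfl⟩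
    exact Finset.le_sup (f := id) this

lemma blk_injOn {d : ℕ} {c : Fin d → Fin n} {j1 j2 : Fin n}
    (h1 : blk c j1 ≠ ∅) (he : blk c j1 = blk c j2) : j1 = j2 := by
  obtain ⟨m, hm⟩ := Finset.nonempty_of_ne_empty h1
  obtain ⟨t, ht, htm⟩ := mem_blk.mp hm
  have hm2 : m ∈ blk c j2 := he ▸ hm
  obtain ⟨t', ht', htm'⟩ := mem_blk.mp hm2
  have : t = t' := Fin.ext (by omega)
  rw [← ht, this, ht']

lemma cOf_parts (hn : 2 ≤ n) {d : ℕ} (c : Fin d → Fin n)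
    (h : st (extc hn c) d = 1) : cOf hn (d := d) (parts c) = c := by
  obtain ⟨hdown, hanti⟩ := (valid_iff_char (extc hn c) d).mp h
  have hP := parts_isPartition c
  have hC := parts_card_le c
  funext t
  apply Fin.ext
  have hne : blk c (c t) ≠ ∅ := by
    rw [blk_ne_empty_iff hn]
    exact (occ_extc_iff hn c (c t)).mpr ⟨t, rfl⟩
  have hbt : blk c (c t) ∈ parts c :=
    Finset.mem_image_of_mem _ (Finset.mem_filter.mpr ⟨Finset.mem_univ _, hne⟩)
  rw [cOf_val hP hn hC hbt t (mem_blk_self t)]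
  have hocc_t : occ (extc hn c) d (c t) := (occ_extc_iff hn c (c t)).mpr ⟨t, rfl⟩
  rw [rnk, parts, Finset.filter_image]
  rw [Finset.card_image_of_injOn (fun j1 hj1 j2 hj2 he =>
    blk_injOn (Finset.mem_filter.mp ((Finset.mem_filter.mp hj1).1)).2 he)]
  have hset : ((Finset.univ.filter (fun j : Fin n => blk c j ≠ ∅)).filter
      (fun j => (blk c (c t)).sup id < (blk c j).sup id)) = Finset.Iio (c t) := by
    ext j
    rw [Finset.mem_filter, Finset.mem_filter, Finset.mem_Iio]
    constructor
    · rintro ⟨⟨-, hjne⟩, hsup⟩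
      have hoccj : occ (extc hn c) d j := (blk_ne_empty_iff hn c j).mp hjne
      rw [sup_blk hn c hoccj, sup_blk hn c hocc_t] at hsup
      rcases lt_trichotomy j (c t) with hx | hx | hx
      · exact hx
      · exfalso; rw [hx] at hsup; omega
      · exfalso
        have := hanti (c t) j hx hoccj
        omega
    · intro hj
      have hoccj : occ (extc hn c) d j := hdown j (c t) (le_of_lt hj) hocc_t
      refine ⟨⟨Finset.mem_univ _, (blk_ne_empty_iff hn c j).mpr hoccj⟩, ?_⟩
      rw [sup_blk hn c hoccj, sup_blk hn c hocc_t]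
      have := hanti j (c t) hj hocc_t
      omega
  rw [hset, Fin.card_Iio]

/-- The equivalence between valid card sequences and partitions. -/
def seqPartEquiv (hn : 2 ≤ n) (d : ℕ) :
    {c : Fin d → Fin n // st (extc hn c) d = 1} ≃
    {A : Finset (Finset ℕ) // IsSetPartition d A ∧ A.card ≤ n} where
  toFun c := ⟨parts c.1, parts_isPartition c.1, parts_card_le c.1⟩
  invFun A := ⟨cOf hn (d := d) A.1, cOf_valid hn A.2.1 A.2.2⟩
  left_inv c := Subtype.ext (cOf_parts hn c.1 c.2)
  right_inv A := Subtype.ext (parts_cOf hn A.2.1 A.2.2)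

/-- **Set partitions of `{1, …, d}` with at most `n` parts count words in a Cayley
graph of `S_n`.** For `n ≥ 2` and `d ≥ 0`, the number of set partitions of `{1, …, d}`
into at most `n` nonempty blocks equals the number of words of length `d` over
`{e} ∪ C_n` which reduce to the identity permutation. -/
theorem setPartition_count_eq_wordCount (n : ℕ) (hn : 2 ≤ n) (d : ℕ) :
    Nat.card {A : Finset (Finset ℕ) // IsSetPartition d A ∧ A.card ≤ n} =
      Nat.card {w : Fin d → {x // x ∈ insert (1 : Equiv.Perm (Fin n)) (Cn n)} //
        (List.ofFn fun i => ((w i : Equiv.Perm (Fin n)))).prod = 1} := by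
  exact Nat.card_congr ((seqPartEquiv hn d).symm.trans (wordEquiv hn d).symm)
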